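/- In a τ-regularized finite MDP whose induced Markov chain is irreducible under every policy, any policy π that is not the (unique) optimal policy satisfies the strict inequality Q^π(s,a) < Q^{π*}(s,a) for every state-action pair (s,a); hence argmax_{π∈Π} Q^π(s,a) = {π*} is a singleton for every (s,a). -/

import Mathlib

open scoped BigOperators

set_option linter.unusedSectionVars false
noncomputable section

def stateDist {S A : Type*} [Fintype S] [Fintype A] (P : S → A → S → ℝ)
    (π : S → A → ℝ) (ρ : S → ℝ) : ℕ → S → ℝ
  | 0 => ρ
  | t + 1 => fun s' => ∑ s, ∑ a, stateDist P π ρ t s * π s a * P s a s'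

def valueFun {S A : Type*} [Fintype S] [Fintype A] (γ τ : ℝ) (r : S → A → ℝ)
    (P : S → A → S → ℝ) (h : S → (A → ℝ) → ℝ) (π : S → A → ℝ) (ρ : S → ℝ) : ℝ :=
  ∑' t : ℕ, γ ^ t * ∑ s, stateDist P π ρ t s *
    ((∑ a, π s a * r s a) - τ * h s (π s))

def valueFunState {S A : Type*} [Fintype S] [Fintype A] [DecidableEq S]
    (γ τ : ℝ) (r : S → A → ℝ) (P : S → A → S → ℝ) (h : S → (A → ℝ) → ℝ)
    (π : S → A → ℝ) (s : S) : ℝ :=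
  valueFun γ τ r P h π (fun s' => if s' = s then 1 else 0)

/-- Regularized Q-function: `Q^π(s,a) = r(s,a) + γ E_{s'∼P(s,a)}[V^π(s')]`. -/
def qFun {S A : Type*} [Fintype S] [Fintype A] [DecidableEq S]
    (γ τ : ℝ) (r : S → A → ℝ) (P : S → A → S → ℝ) (h : S → (A → ℝ) → ℝ)
    (π : S → A → ℝ) (s : S) (a : A) : ℝ :=
  r s a + γ * ∑ s', P s a s' * valueFunState γ τ r P h π s'

section aux
variable {S A : Type*} [Fintype S] [Fintype A] [DecidableEq S]

/-- one-step regularized reward -/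
def cRew (τ : ℝ) (r : S → A → ℝ) (h : S → (A → ℝ) → ℝ) (π : S → A → ℝ) (s : S) : ℝ :=
  (∑ a, π s a * r s a) - τ * h s (π s)

lemma val_def (γ τ : ℝ) (r : S → A → ℝ) (P : S → A → S → ℝ) (h : S → (A → ℝ) → ℝ)
    (π : S → A → ℝ) (ρ : S → ℝ) :
    valueFun γ τ r P h π ρ
      = ∑' t : ℕ, γ ^ t * ∑ s, stateDist P π ρ t s * cRew τ r h π s := rfl

lemma sd_nonneg (P : S → A → S → ℝ) (π : S → A → ℝ) (ρ : S → ℝ)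
    (hπ : ∀ s a, 0 ≤ π s a) (hP : ∀ s a s', 0 ≤ P s a s') (hρ : ∀ s, 0 ≤ ρ s) :
    ∀ t s', 0 ≤ stateDist P π ρ t s' := by
  intro t
  induction t with
  | zero => exact hρ
  | succ t ih =>
    intro s'
    refine Finset.sum_nonneg fun s _ => Finset.sum_nonneg fun a _ => ?_
    exact mul_nonneg (mul_nonneg (ih s) (hπ s a)) (hP s a s')

lemma sd_mass (P : S → A → S → ℝ) (π : S → A → ℝ) (ρ : S → ℝ)
    (hπ : ∀ s, ∑ a, π s a = 1) (hP : ∀ s a, ∑ s', P s a s' = 1) :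
    ∀ t, ∑ s', stateDist P π ρ t s' = ∑ s, ρ s := by
  intro t
  induction t with
  | zero => rfl
  | succ t ih =>
    show (∑ s', ∑ s, ∑ a, stateDist P π ρ t s * π s a * P s a s') = _
    rw [Finset.sum_comm]
    have : ∀ s, (∑ s', ∑ a, stateDist P π ρ t s * π s a * P s a s')
        = stateDist P π ρ t s := by
      intro s
      rw [Finset.sum_comm]
      have : ∀ a, (∑ s', stateDist P π ρ t s * π s a * P s a s')
          = stateDist P π ρ t s * π s a := by
        intro a
        rw [← Finset.mul_sum, hP s a, mul_one]
      rw [Finset.sum_congr rfl fun a _ => this a, ← Finset.mul_sum, hπ s, mul_one]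
    rw [Finset.sum_congr rfl fun s _ => this s, ih]

lemma sd_shift (P : S → A → S → ℝ) (π : S → A → ℝ) (ρ : S → ℝ) :
    ∀ t, stateDist P π (stateDist P π ρ 1) t = stateDist P π ρ (t + 1) := by
  intro t
  induction t with
  | zero => rfl
  | succ t ih =>
    funext s'
    show (∑ s, ∑ a, stateDist P π (stateDist P π ρ 1) t s * π s a * P s a s') = _
    rw [ih]
    rfl

lemma sd_linear (P : S → A → S → ℝ) (π : S → A → ℝ) (ρ : S → ℝ) :
    ∀ t s', stateDist P π ρ t s'
      = ∑ s0, ρ s0 * stateDist P π (fun s'' => if s'' = s0 then 1 else 0) t s' := by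
  intro t
  induction t with
  | zero =>
    intro s'
    show ρ s' = ∑ s0, ρ s0 * (if s' = s0 then 1 else 0)
    simp [Finset.sum_ite_eq]
  | succ t ih =>
    intro s'
    show (∑ s, ∑ a, stateDist P π ρ t s * π s a * P s a s') = _
    have : ∀ s a, stateDist P π ρ t s * π s a * P s a s'
        = ∑ s0, ρ s0 * (stateDist P π (fun s'' => if s'' = s0 then 1 else 0) t s
            * π s a * P s a s') := by
      intro s a
      rw [ih s, Finset.sum_mul, Finset.sum_mul]
      exact Finset.sum_congr rfl fun s0 _ => by ring
    simp_rw [this]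
    have swap1 : ∀ s : S, (∑ a, ∑ s0, ρ s0 * (stateDist P π (fun s'' => if s'' = s0 then 1 else 0) t s
            * π s a * P s a s'))
        = ∑ s0, ∑ a, ρ s0 * (stateDist P π (fun s'' => if s'' = s0 then 1 else 0) t s
            * π s a * P s a s') := fun s => Finset.sum_comm
    rw [Finset.sum_congr rfl fun s _ => swap1 s, Finset.sum_comm]
    refine Finset.sum_congr rfl fun s0 _ => ?_
    show _ = ρ s0 * ∑ s, ∑ a, stateDist P π (fun s'' => if s'' = s0 then 1 else 0) t s
        * π s a * P s a s'
    rw [Finset.mul_sum]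
    refine Finset.sum_congr rfl fun s _ => ?_
    rw [Finset.mul_sum]

lemma sd_le_one (P : S → A → S → ℝ) (π : S → A → ℝ) (ρ : S → ℝ)
    (hπ : ∀ s, (∀ a, 0 ≤ π s a) ∧ ∑ a, π s a = 1)
    (hP : ∀ s a, (∀ s', 0 ≤ P s a s') ∧ ∑ s', P s a s' = 1)
    (hρ : ∀ s, 0 ≤ ρ s) (hm : ∑ s, ρ s = 1) (t : ℕ) (s' : S) :
    stateDist P π ρ t s' ≤ 1 := by
  have hmass := sd_mass P π ρ (fun s => (hπ s).2) (fun s a => (hP s a).2) t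
  rw [hm] at hmass
  calc stateDist P π ρ t s'
      ≤ ∑ s'', stateDist P π ρ t s'' :=
        Finset.single_le_sum (f := fun s'' => stateDist P π ρ t s'')
          (fun s'' _ => sd_nonneg P π ρ (fun s a => (hπ s).1 a)
            (fun s a s'' => (hP s a).1 s'') hρ t s'') (Finset.mem_univ s')
    _ = 1 := hmass

lemma summable_sd {γ : ℝ} (hγ0 : 0 ≤ γ) (hγ1 : γ < 1)
    (P : S → A → S → ℝ) (π : S → A → ℝ) (ρ : S → ℝ)
    (hπ : ∀ s, (∀ a, 0 ≤ π s a) ∧ ∑ a, π s a = 1)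
    (hP : ∀ s a, (∀ s', 0 ≤ P s a s') ∧ ∑ s', P s a s' = 1)
    (hρ : ∀ s, 0 ≤ ρ s) (hm : ∑ s, ρ s = 1) (f : S → ℝ) :
    Summable (fun t : ℕ => γ ^ t * ∑ s, stateDist P π ρ t s * f s) := by
  refine Summable.of_norm_bounded (g := fun t => (∑ s, |f s|) * γ ^ t)
    ((summable_geometric_of_lt_one hγ0 hγ1).mul_left _) fun t => ?_
  rw [Real.norm_eq_abs, abs_mul, abs_pow, abs_of_nonneg hγ0, mul_comm]
  refine mul_le_mul_of_nonneg_right ?_ (pow_nonneg hγ0 t)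
  calc |∑ s, stateDist P π ρ t s * f s|
      ≤ ∑ s, |stateDist P π ρ t s * f s| := Finset.abs_sum_le_sum_abs _ _
    _ ≤ ∑ s, |f s| := by
        refine Finset.sum_le_sum fun s _ => ?_
        rw [abs_mul, abs_of_nonneg (sd_nonneg P π ρ (fun s a => (hπ s).1 a)
          (fun s a s'' => (hP s a).1 s'') hρ t s)]
        calc stateDist P π ρ t s * |f s| ≤ 1 * |f s| :=
              mul_le_mul_of_nonneg_right (sd_le_one P π ρ hπ hP hρ hm t s) (abs_nonneg _)
          _ = |f s| := one_mul _

lemma delta_nonneg (s0 : S) : ∀ s'' : S, (0:ℝ) ≤ if s'' = s0 then 1 else 0 := by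
  intro s''; split <;> norm_num

lemma delta_mass (s0 : S) : (∑ s'' : S, if s'' = s0 then (1:ℝ) else 0) = 1 := by
  simp [Finset.sum_ite_eq']

lemma sum_swap_mul (c : S → ℝ) (g : S → ℝ) (F : S → S → ℝ) (γt : ℝ) :
    γt * ∑ s, (∑ s0, g s0 * F s0 s) * c s = ∑ s0, g s0 * (γt * ∑ s, F s0 s * c s) := by
  simp_rw [Finset.sum_mul, Finset.mul_sum]
  rw [Finset.sum_comm]
  exact Finset.sum_congr rfl fun s0 _ => Finset.sum_congr rfl fun s _ => by ring

lemma val_linear {γ : ℝ} (hγ0 : 0 ≤ γ) (hγ1 : γ < 1) (τ : ℝ) (r : S → A → ℝ)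
    (P : S → A → S → ℝ) (h : S → (A → ℝ) → ℝ) (π : S → A → ℝ) (ρ : S → ℝ)
    (hπ : ∀ s, (∀ a, 0 ≤ π s a) ∧ ∑ a, π s a = 1)
    (hP : ∀ s a, (∀ s', 0 ≤ P s a s') ∧ ∑ s', P s a s' = 1) :
    valueFun γ τ r P h π ρ = ∑ s0, ρ s0 * valueFunState γ τ r P h π s0 := by
  have hδ : ∀ s0 : S, Summable (fun t : ℕ => γ ^ t *
      ∑ s, stateDist P π (fun s'' => if s'' = s0 then 1 else 0) t s * cRew τ r h π s) :=
    fun s0 => summable_sd hγ0 hγ1 P π _ hπ hP (delta_nonneg s0) (delta_mass s0) _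
  rw [val_def]
  calc (∑' t : ℕ, γ ^ t * ∑ s, stateDist P π ρ t s * cRew τ r h π s)
      = ∑' t : ℕ, ∑ s0, ρ s0 * (γ ^ t *
          ∑ s, stateDist P π (fun s'' => if s'' = s0 then 1 else 0) t s * cRew τ r h π s) := by
        refine tsum_congr fun t => ?_
        rw [Finset.sum_congr rfl fun s (_ : s ∈ Finset.univ) =>
          congrArg (· * cRew τ r h π s) (sd_linear P π ρ t s)]
        exact sum_swap_mul _ _ _ _
    _ = ∑ s0, ρ s0 * valueFunState γ τ r P h π s0 := by
        rw [Summable.tsum_finsetSum fun s0 _ => (hδ s0).mul_left (ρ s0)]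
        exact Finset.sum_congr rfl fun s0 _ => by
          rw [tsum_mul_left]; rfl

lemma bellman {γ : ℝ} (hγ0 : 0 ≤ γ) (hγ1 : γ < 1) (τ : ℝ) (r : S → A → ℝ)
    (P : S → A → S → ℝ) (h : S → (A → ℝ) → ℝ) (π : S → A → ℝ)
    (hπ : ∀ s, (∀ a, 0 ≤ π s a) ∧ ∑ a, π s a = 1)
    (hP : ∀ s a, (∀ s', 0 ≤ P s a s') ∧ ∑ s', P s a s' = 1) (s0 : S) :
    valueFunState γ τ r P h π s0 = cRew τ r h π s0
      + γ * ∑ s', (∑ a, π s0 a * P s0 a s') * valueFunState γ τ r P h π s' := by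
  set δ : S → ℝ := fun s'' => if s'' = s0 then 1 else 0 with hδdef
  have hsum : Summable (fun t : ℕ => γ ^ t * ∑ s, stateDist P π δ t s * cRew τ r h π s) :=
    summable_sd hγ0 hγ1 P π δ hπ hP (delta_nonneg s0) (delta_mass s0) _
  have h0 : (∑ s, stateDist P π δ 0 s * cRew τ r h π s) = cRew τ r h π s0 := by
    show (∑ s, (if s = s0 then (1:ℝ) else 0) * cRew τ r h π s) = _
    simp [Finset.sum_ite_eq']
  have h1 : ∀ s', stateDist P π δ 1 s' = ∑ a, π s0 a * P s0 a s' := by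
    intro s'
    show (∑ s, ∑ a, (if s = s0 then (1:ℝ) else 0) * π s a * P s a s') = _
    rw [Finset.sum_congr rfl fun s (_ : s ∈ Finset.univ) =>
      (Finset.sum_congr rfl fun a (_ : a ∈ Finset.univ) => by
        rw [mul_assoc] : (∑ a, (if s = s0 then (1:ℝ) else 0) * π s a * P s a s')
          = ∑ a, (if s = s0 then (1:ℝ) else 0) * (π s a * P s a s'))]
    simp_rw [← Finset.mul_sum]
    simp [Finset.sum_ite_eq']
  have key : valueFunState γ τ r P h π s0
      = cRew τ r h π s0 + γ * valueFun γ τ r P h π (stateDist P π δ 1) := by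
    show (∑' t : ℕ, γ ^ t * ∑ s, stateDist P π δ t s * cRew τ r h π s) = _
    rw [Summable.tsum_eq_zero_add hsum]
    congr 1
    · rw [pow_zero, one_mul, h0]
    · rw [val_def]
      have : ∀ t : ℕ, γ ^ (t + 1) * ∑ s, stateDist P π δ (t + 1) s * cRew τ r h π s
          = γ * (γ ^ t * ∑ s, stateDist P π (stateDist P π δ 1) t s * cRew τ r h π s) := by
        intro t
        rw [sd_shift, pow_succ]
        ring
      rw [tsum_congr this, tsum_mul_left]
  rw [key, val_linear hγ0 hγ1 τ r P h π _ hπ hP]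
  congr 1
  rw [Finset.mul_sum, Finset.mul_sum]
  exact Finset.sum_congr rfl fun s' _ => by rw [h1 s']

/-- advantage-type gap of `π` relative to the value of `π'` -/
def gapF (γ τ : ℝ) (r : S → A → ℝ) (P : S → A → S → ℝ) (h : S → (A → ℝ) → ℝ)
    (π π' : S → A → ℝ) (s : S) : ℝ :=
  cRew τ r h π s + γ * (∑ s', (∑ a, π s a * P s a s') * valueFunState γ τ r P h π' s')
    - valueFunState γ τ r P h π' s

lemma pdl {γ : ℝ} (hγ0 : 0 ≤ γ) (hγ1 : γ < 1) (τ : ℝ) (r : S → A → ℝ)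
    (P : S → A → S → ℝ) (h : S → (A → ℝ) → ℝ) (π π' : S → A → ℝ) (ρ : S → ℝ)
    (hπ : ∀ s, (∀ a, 0 ≤ π s a) ∧ ∑ a, π s a = 1)
    (hP : ∀ s a, (∀ s', 0 ≤ P s a s') ∧ ∑ s', P s a s' = 1)
    (hρ : ∀ s, 0 ≤ ρ s) (hm : ∑ s, ρ s = 1) :
    valueFun γ τ r P h π ρ - ∑ s0, ρ s0 * valueFunState γ τ r P h π' s0
      = ∑' t : ℕ, γ ^ t * ∑ s, stateDist P π ρ t s * gapF γ τ r P h π π' s := by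
  have hA : Summable (fun t : ℕ => γ ^ t * ∑ s, stateDist P π ρ t s * cRew τ r h π s) :=
    summable_sd hγ0 hγ1 P π ρ hπ hP hρ hm (cRew τ r h π)
  have hB : Summable (fun t : ℕ => γ ^ t * ∑ s, stateDist P π ρ t s
      * valueFunState γ τ r P h π' s) :=
    summable_sd hγ0 hγ1 P π ρ hπ hP hρ hm (valueFunState γ τ r P h π')
  have hB1 : Summable (fun t : ℕ => γ ^ (t + 1) * ∑ s, stateDist P π ρ (t + 1) s
      * valueFunState γ τ r P h π' s) := by
    have := (summable_nat_add_iff (f := fun t : ℕ => γ ^ t * ∑ s, stateDist P π ρ t s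
      * valueFunState γ τ r P h π' s) 1).2 hB
    exact this
  have key : ∀ t : ℕ, (∑ s, stateDist P π ρ t s *
        (∑ s', (∑ a, π s a * P s a s') * valueFunState γ τ r P h π' s'))
      = ∑ s', stateDist P π ρ (t + 1) s' * valueFunState γ τ r P h π' s' := by
    intro t
    show _ = ∑ s', (∑ s, ∑ a, stateDist P π ρ t s * π s a * P s a s')
        * valueFunState γ τ r P h π' s'
    simp_rw [Finset.mul_sum, Finset.sum_mul]
    rw [Finset.sum_comm]
    refine Finset.sum_congr rfl fun s' _ => Finset.sum_congr rfl fun s _ => ?_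
    rw [Finset.mul_sum]
    exact Finset.sum_congr rfl fun a _ => by ring
  have perT : ∀ t : ℕ, γ ^ t * ∑ s, stateDist P π ρ t s * gapF γ τ r P h π π' s
      = (γ ^ t * ∑ s, stateDist P π ρ t s * cRew τ r h π s)
        + (γ ^ (t + 1) * ∑ s, stateDist P π ρ (t + 1) s * valueFunState γ τ r P h π' s)
        - (γ ^ t * ∑ s, stateDist P π ρ t s * valueFunState γ τ r P h π' s) := by
    intro t
    have expand : ∑ s, stateDist P π ρ t s * gapF γ τ r P h π π' s
        = (∑ s, stateDist P π ρ t s * cRew τ r h π s)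
          + γ * (∑ s, stateDist P π ρ t s *
              (∑ s', (∑ a, π s a * P s a s') * valueFunState γ τ r P h π' s'))
          - ∑ s, stateDist P π ρ t s * valueFunState γ τ r P h π' s := by
      unfold gapF
      rw [Finset.mul_sum]
      rw [← Finset.sum_add_distrib, ← Finset.sum_sub_distrib]
      exact Finset.sum_congr rfl fun s _ => by ring
    rw [expand, key t, pow_succ]
    ring
  have e0 : stateDist P π ρ 0 = ρ := rfl
  rw [tsum_congr perT, Summable.tsum_sub (hA.add hB1) hB, Summable.tsum_add hA hB1,
    Summable.tsum_eq_zero_add hB, val_def, pow_zero, e0, one_mul]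
  ring

lemma gap_nonpos {γ : ℝ} (hγ0 : 0 ≤ γ) (hγ1 : γ < 1) (τ : ℝ) (r : S → A → ℝ)
    (P : S → A → S → ℝ) (h : S → (A → ℝ) → ℝ) (π π' : S → A → ℝ)
    (hπ : ∀ s, (∀ a, 0 ≤ π s a) ∧ ∑ a, π s a = 1)
    (hπ' : ∀ s, (∀ a, 0 ≤ π' s a) ∧ ∑ a, π' s a = 1)
    (hP : ∀ s a, (∀ s', 0 ≤ P s a s') ∧ ∑ s', P s a s' = 1)
    (hopt' : ∀ π'' : S → A → ℝ, (∀ s, (∀ a, 0 ≤ π'' s a) ∧ ∑ a, π'' s a = 1) →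
      ∀ s, valueFunState γ τ r P h π'' s ≤ valueFunState γ τ r P h π' s)
    (s : S) : gapF γ τ r P h π π' s ≤ 0 := by
  classical
  set πs : S → A → ℝ := fun s1 => if s1 = s then π s1 else π' s1 with hπsdef
  have hπs : ∀ s1, (∀ a, 0 ≤ πs s1 a) ∧ ∑ a, πs s1 a = 1 := by
    intro s1
    by_cases h1 : s1 = s
    · constructor
      · intro a; show 0 ≤ (if s1 = s then π s1 else π' s1) a
        rw [if_pos h1]; exact (hπ s1).1 a
      · show (∑ a, (if s1 = s then π s1 else π' s1) a) = 1
        rw [if_pos h1]; exact (hπ s1).2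
    · constructor
      · intro a; show 0 ≤ (if s1 = s then π s1 else π' s1) a
        rw [if_neg h1]; exact (hπ' s1).1 a
      · show (∑ a, (if s1 = s then π s1 else π' s1) a) = 1
        rw [if_neg h1]; exact (hπ' s1).2
  have heqs : πs s = π s := by rw [hπsdef]; exact if_pos rfl
  have hgs : gapF γ τ r P h πs π' s = gapF γ τ r P h π π' s := by
    unfold gapF cRew
    rw [heqs]
  have hg0 : ∀ s1, s1 ≠ s → gapF γ τ r P h πs π' s1 = 0 := by
    intro s1 hne
    have heq : πs s1 = π' s1 := by rw [hπsdef]; exact if_neg hne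
    unfold gapF cRew
    rw [heq]
    have hb := bellman hγ0 hγ1 τ r P h π' hπ' hP s1
    unfold cRew at hb
    linarith [hb]
  set δ : S → ℝ := fun s'' => if s'' = s then (1:ℝ) else 0 with hδdef
  have hpdl := pdl hγ0 hγ1 τ r P h πs π' δ hπs hP (delta_nonneg s) (delta_mass s)
  have hδV : (∑ s0, δ s0 * valueFunState γ τ r P h π' s0)
      = valueFunState γ τ r P h π' s := by
    rw [hδdef]
    simp [Finset.sum_ite_eq']
  have hinner : ∀ t, (∑ s1, stateDist P πs δ t s1 * gapF γ τ r P h πs π' s1)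
      = stateDist P πs δ t s * gapF γ τ r P h π π' s := by
    intro t
    rw [← hgs]
    exact Finset.sum_eq_single_of_mem s (Finset.mem_univ s)
      (fun s1 _ hne => by rw [hg0 s1 hne, mul_zero])
  have hK : Summable (fun t : ℕ => γ ^ t * stateDist P πs δ t s) := by
    refine (summable_sd hγ0 hγ1 P πs δ hπs hP (delta_nonneg s) (delta_mass s)
      (fun s1 => if s1 = s then (1:ℝ) else 0)).congr fun t => ?_
    congr 1
    simp [mul_ite, Finset.sum_ite_eq']
  have hK1 : (1:ℝ) ≤ ∑' t : ℕ, γ ^ t * stateDist P πs δ t s := by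
    have h0 : γ ^ 0 * stateDist P πs δ 0 s = 1 := by
      show γ ^ 0 * (if s = s then (1:ℝ) else 0) = 1
      simp
    calc (1:ℝ) = γ ^ 0 * stateDist P πs δ 0 s := h0.symm
      _ ≤ ∑' t : ℕ, γ ^ t * stateDist P πs δ t s :=
        Summable.le_tsum hK 0 fun j _ => mul_nonneg (pow_nonneg hγ0 j)
          (sd_nonneg P πs δ (fun s1 a => (hπs s1).1 a) (fun s1 a s2 => (hP s1 a).1 s2)
            (delta_nonneg s) j s)
  have hval : valueFun γ τ r P h πs δ = valueFunState γ τ r P h πs s := rfl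
  have hle : valueFunState γ τ r P h πs s ≤ valueFunState γ τ r P h π' s :=
    hopt' πs hπs s
  have hmain : (∑' t : ℕ, γ ^ t * stateDist P πs δ t s) * gapF γ τ r P h π π' s ≤ 0 := by
    rw [← tsum_mul_right]
    have : (∑' t : ℕ, γ ^ t * stateDist P πs δ t s * gapF γ τ r P h π π' s)
        = valueFun γ τ r P h πs δ - ∑ s0, δ s0 * valueFunState γ τ r P h π' s0 := by
      rw [hpdl]
      exact tsum_congr fun t => by rw [hinner t, mul_assoc]
    rw [this, hval, hδV]
    linarith
  nlinarith [hK1, hmain]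

end aux

/-- **Strict Q-dominance of the unique optimal policy under irreducibility.**
In a `τ`-regularized finite MDP whose induced Markov chain is irreducible under every
policy, any policy `π ∈ Pol` different from the unique optimal policy `πstar`
satisfies `Q^π(s,a) < Q^{πstar}(s,a)` for every `(s,a)`; hence for every `(s,a)` the
set `argmax_{π∈Pol} Q^π(s,a)` is the singleton `{πstar}`. -/
theorem strict_q_dominance_of_unique_optimal {S A : Type*} [Fintype S] [Fintype A]
    [DecidableEq S] [Nonempty S] [Nonempty A]
    (γ τ : ℝ) (hγ0 : 0 < γ) (hγ1 : γ < 1) (hτ : 0 ≤ τ)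
    (r : S → A → ℝ) (P : S → A → S → ℝ)
    (hP : ∀ s a, (∀ s', 0 ≤ P s a s') ∧ ∑ s', P s a s' = 1)
    (h : S → (A → ℝ) → ℝ)
    (Pol : Set (S → A → ℝ))
    (hPol : Pol = {π | ∀ s, (∀ a, 0 ≤ π s a) ∧ ∑ a, π s a = 1})
    (hirr : ∀ π ∈ Pol, ∀ s a (sbar : S),
      ∃ i : ℕ, 0 < stateDist P π (fun s' => P s a s') i sbar)
    (πstar : S → A → ℝ) (hπstar : πstar ∈ Pol)
    (hopt : ∀ π ∈ Pol, ∀ s,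
      valueFunState γ τ r P h π s ≤ valueFunState γ τ r P h πstar s)
    (huniq : ∀ π ∈ Pol,
      (∀ π' ∈ Pol, ∀ s,
        valueFunState γ τ r P h π' s ≤ valueFunState γ τ r P h π s) → π = πstar) :
    (∀ π ∈ Pol, π ≠ πstar → ∀ s a, qFun γ τ r P h π s a < qFun γ τ r P h πstar s a) ∧
    (∀ s a, {π | π ∈ Pol ∧ ∀ π' ∈ Pol, qFun γ τ r P h π' s a ≤ qFun γ τ r P h π s a}
      = {πstar}) := by
  classical
  subst hPol
  have hπstar' : ∀ s, (∀ a, 0 ≤ πstar s a) ∧ ∑ a, πstar s a = 1 := hπstar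
  have main : ∀ π ∈ {π : S → A → ℝ | ∀ s, (∀ a, 0 ≤ π s a) ∧ ∑ a, π s a = 1},
      π ≠ πstar → ∀ s a, qFun γ τ r P h π s a < qFun γ τ r P h πstar s a := by
    intro π hπmem hne s a
    have hπ : ∀ s, (∀ a, 0 ≤ π s a) ∧ ∑ a, π s a = 1 := hπmem
    have hg : ∀ s1, gapF γ τ r P h π πstar s1 ≤ 0 := fun s1 =>
      gap_nonpos hγ0.le hγ1 τ r P h π πstar hπ hπstar' hP
        (fun π'' hπ'' => hopt π'' hπ'') s1
    -- there is a state with strictly negative gap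
    have hex : ∃ s0, gapF γ τ r P h π πstar s0 < 0 := by
      by_contra hno
      push_neg at hno
      have hz : ∀ s1, gapF γ τ r P h π πstar s1 = 0 := fun s1 =>
        le_antisymm (hg s1) (hno s1)
      have hVeq : ∀ s0, valueFunState γ τ r P h π s0
          = valueFunState γ τ r P h πstar s0 := by
        intro s0
        have hpdl := pdl hγ0.le hγ1 τ r P h π πstar
          (fun s'' => if s'' = s0 then (1:ℝ) else 0) hπ hP (delta_nonneg s0) (delta_mass s0)
        have hz' : (∑' t : ℕ, γ ^ t * ∑ s1,
            stateDist P π (fun s'' => if s'' = s0 then (1:ℝ) else 0) t s1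
              * gapF γ τ r P h π πstar s1) = 0 := by
          have hzz : ∀ t : ℕ, γ ^ t * (∑ s1,
              stateDist P π (fun s'' => if s'' = s0 then (1:ℝ) else 0) t s1
                * gapF γ τ r P h π πstar s1) = 0 := by
            intro t
            rw [Finset.sum_eq_zero fun s1 _ => by rw [hz s1, mul_zero], mul_zero]
          rw [tsum_congr hzz, tsum_zero]
        rw [hz'] at hpdl
        have hδV : (∑ s0' : S, (if s0' = s0 then (1:ℝ) else 0)
            * valueFunState γ τ r P h πstar s0')
            = valueFunState γ τ r P h πstar s0 := by
          simp [ite_mul, Finset.sum_ite_eq']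
        rw [hδV] at hpdl
        have hvv : valueFun γ τ r P h π (fun s'' => if s'' = s0 then (1:ℝ) else 0)
            = valueFunState γ τ r P h π s0 := rfl
        rw [hvv] at hpdl
        linarith
      exact hne (huniq π hπmem fun π'' hπ'' s1 => (hopt π'' hπ'' s1).trans (hVeq s1).ge)
    obtain ⟨s0, hs0⟩ := hex
    obtain ⟨i, hi⟩ := hirr π hπmem s a s0
    have hρ0n : ∀ s', 0 ≤ P s a s' := (hP s a).1
    have hρ0m : ∑ s', P s a s' = 1 := (hP s a).2
    have hpdl := pdl hγ0.le hγ1 τ r P h π πstar (fun s' => P s a s') hπ hP hρ0n hρ0m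
    beta_reduce at hpdl
    have hdn : ∀ t s1, 0 ≤ stateDist P π (fun s' => P s a s') t s1 :=
      sd_nonneg P π _ (fun s1 a1 => (hπ s1).1 a1) (fun s1 a1 s2 => (hP s1 a1).1 s2) hρ0n
    have hterm : ∀ t : ℕ, γ ^ t * (∑ s1, stateDist P π (fun s' => P s a s') t s1
        * gapF γ τ r P h π πstar s1) ≤ 0 := fun t =>
      mul_nonpos_of_nonneg_of_nonpos (pow_nonneg hγ0.le t)
        (Finset.sum_nonpos fun s1 _ =>
          mul_nonpos_of_nonneg_of_nonpos (hdn t s1) (hg s1))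
    have hsummable : Summable (fun t : ℕ => γ ^ t *
        ∑ s1, stateDist P π (fun s' => P s a s') t s1 * gapF γ τ r P h π πstar s1) :=
      summable_sd hγ0.le hγ1 P π _ hπ hP hρ0n hρ0m (gapF γ τ r P h π πstar)
    have hi' : γ ^ i * (∑ s1, stateDist P π (fun s' => P s a s') i s1
        * gapF γ τ r P h π πstar s1) < 0 := by
      have h1 : (∑ s1, stateDist P π (fun s' => P s a s') i s1
          * gapF γ τ r P h π πstar s1)
          ≤ stateDist P π (fun s' => P s a s') i s0 * gapF γ τ r P h π πstar s0 := by
        have hs := Finset.single_le_sum (f := fun s1 =>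
            -(stateDist P π (fun s' => P s a s') i s1 * gapF γ τ r P h π πstar s1))
          (fun s1 _ => neg_nonneg.2 (mul_nonpos_of_nonneg_of_nonpos (hdn i s1) (hg s1)))
          (Finset.mem_univ s0)
        rw [Finset.sum_neg_distrib] at hs
        beta_reduce at hs
        linarith
      have h2 : stateDist P π (fun s' => P s a s') i s0 * gapF γ τ r P h π πstar s0 < 0 :=
        mul_neg_of_pos_of_neg hi hs0
      exact mul_neg_of_pos_of_neg (pow_pos hγ0 i) (h1.trans_lt h2)
    have htsum : (∑' t : ℕ, γ ^ t * ∑ s1, stateDist P π (fun s' => P s a s') t s1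
        * gapF γ τ r P h π πstar s1) < 0 := by
      have hle := Summable.le_tsum hsummable.neg i fun j _ => neg_nonneg.2 (hterm j)
      rw [tsum_neg] at hle
      linarith
    have hlt : valueFun γ τ r P h π (fun s' => P s a s')
        - ∑ s1, P s a s1 * valueFunState γ τ r P h πstar s1 < 0 := by
      rw [hpdl]; exact htsum
    have e1 := val_linear hγ0.le hγ1 τ r P h π (fun s' => P s a s') hπ hP
    have h3 : (∑ s1, P s a s1 * valueFunState γ τ r P h π s1)
        < ∑ s1, P s a s1 * valueFunState γ τ r P h πstar s1 := by
      rw [← e1]; linarith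
    show r s a + γ * ∑ s', P s a s' * valueFunState γ τ r P h π s'
        < r s a + γ * ∑ s', P s a s' * valueFunState γ τ r P h πstar s'
    have := mul_lt_mul_of_pos_left h3 hγ0
    linarith
  refine ⟨main, fun s a => ?_⟩
  ext π
  simp only [Set.mem_setOf_eq, Set.mem_singleton_iff]
  constructor
  · rintro ⟨hπmem, hdom⟩
    by_contra hne
    exact absurd (hdom πstar hπstar) (not_le.2 (main π hπmem hne s a))
  · intro hq
    refine ⟨hq ▸ hπstar, fun π' hπ' => ?_⟩
    rw [hq]
    by_cases hne : π' = πstar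
    · rw [hne]
    · exact (main π' hπ' hne s a).le

end
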